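/- Let f : [a,b] ⊆ [0,∞) → [0,∞) be continuous and convex, 0 ≤ a < b, and p, q > 0. Then ∫_a^b (x-a)^p (b-x)^q f(x) f(a+b-x) dx ≤ ((b-a)^{p+q+1}/2) { (f(a)^2+f(b)^2)[B(p+1,q+3) + B(q+1,p+3)] + 4 f(a) f(b) B(p+2,q+2) }, where B is the Euler Beta function. -/

import Mathlib

open MeasureTheory Set

noncomputable def eulerBeta (m n : ℝ) : ℝ := ∫ t in (0:ℝ)..1, t ^ (m - 1) * (1 - t) ^ (n - 1)

lemma eulerBeta_symm (m n : ℝ) : eulerBeta m n = eulerBeta n m := by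
  unfold eulerBeta
  have h := intervalIntegral.integral_comp_sub_left (a := (0:ℝ)) (b := 1)
    (fun t => t ^ (n-1) * (1-t) ^ (m-1)) 1
  norm_num at h
  rw [← h]
  apply intervalIntegral.integral_congr
  intro t _
  ring_nf

lemma key_int (a b : ℝ) (hab : a < b) (r s : ℝ) (hr : 0 < r) (hs : 0 < s) :
    (∫ x in a..b, (x - a) ^ r * (b - x) ^ s)
      = (b - a) ^ (r + s + 1) * eulerBeta (r + 1) (s + 1) := by
  set L := b - a with hLdef
  have hL : 0 < L := by simp [hLdef]; linarith
  have hg : Continuous fun x : ℝ => (x - a) ^ r * (b - x) ^ s := by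
    apply Continuous.mul
    · exact (Real.continuous_rpow_const hr.le).comp (by continuity)
    · exact (Real.continuous_rpow_const hs.le).comp (by continuity)
  have hderiv : ∀ t ∈ uIcc (0:ℝ) 1, HasDerivAt (fun t => a + t * L) L t := by
    intro t _
    simpa using ((hasDerivAt_id t).mul_const L).const_add a
  have hsub := intervalIntegral.integral_comp_smul_deriv hderiv continuousOn_const hg
  have h01 : a + 0 * L = a := by ring
  have h11 : a + 1 * L = b := by rw [hLdef]; ring
  rw [h01, h11] at hsub
  rw [← hsub]
  have congr1 : ∀ t ∈ uIcc (0:ℝ) 1,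
      L • ((fun x : ℝ => (x - a) ^ r * (b - x) ^ s) ∘ (fun t => a + t * L)) t
        = (L * L ^ r * L ^ s) * (t ^ r * (1 - t) ^ s) := by
    intro t ht
    rw [uIcc_of_le (by norm_num)] at ht
    have ht0 : (0:ℝ) ≤ t := ht.1
    have ht1 : t ≤ 1 := ht.2
    have e1 : a + t * L - a = t * L := by ring
    have e2 : b - (a + t * L) = (1 - t) * L := by rw [hLdef]; ring
    simp only [Function.comp, smul_eq_mul, e1, e2]
    rw [Real.mul_rpow ht0 hL.le, Real.mul_rpow (by linarith) hL.le]
    ring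
  rw [intervalIntegral.integral_congr congr1, intervalIntegral.integral_const_mul]
  unfold eulerBeta
  have : r + 1 - 1 = r := by ring
  rw [this]
  have : s + 1 - 1 = s := by ring
  rw [this]
  congr 1
  rw [Real.rpow_add hL, Real.rpow_add hL, Real.rpow_one]
  ring

theorem cor_2_3 (f : ℝ → ℝ) (a b : ℝ) (ha : 0 ≤ a) (hab : a < b)
    (hf : ContinuousOn f (Icc a b)) (hnn : ∀ x ∈ Icc a b, 0 ≤ f x)
    (hconv : ConvexOn ℝ (Icc a b) f)
    (p q : ℝ) (hp : 0 < p) (hq : 0 < q) :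
    ∫ x in a..b, (x - a) ^ p * (b - x) ^ q * (f x * f (a + b - x)) ≤
      (b - a) ^ (p + q + 1) / 2 *
        ((f a ^ 2 + f b ^ 2) * (eulerBeta (p + 1) (q + 3) + eulerBeta (q + 1) (p + 3)) +
          4 * f a * f b * eulerBeta (p + 2) (q + 2)) := by
  have hL : (0:ℝ) < b - a := by linarith
  set A := f a with hA
  set B := f b with hB
  have hA0 : 0 ≤ A := hnn a ⟨le_refl a, hab.le⟩
  have hB0 : 0 ≤ B := hnn b ⟨hab.le, le_refl b⟩
  set L := b - a with hLdef
  -- the comparison function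
  set G : ℝ → ℝ := fun x => (1 / (2 * L ^ 2)) *
      ((A ^ 2 + B ^ 2) * ((x - a) ^ p * (b - x) ^ (q + 2) + (x - a) ^ (p + 2) * (b - x) ^ q)
        + 4 * A * B * ((x - a) ^ (p + 1) * (b - x) ^ (q + 1))) with hG
  -- continuity helpers
  have cmon : ∀ r s : ℝ, 0 < r → 0 < s →
      Continuous fun x : ℝ => (x - a) ^ r * (b - x) ^ s := by
    intro r s hr hs
    apply Continuous.mul
    · exact (Real.continuous_rpow_const hr.le).comp (by continuity)
    · exact (Real.continuous_rpow_const hs.le).comp (by continuity)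
  have mapsto : ∀ x ∈ Icc a b, a + b - x ∈ Icc a b := by
    intro x hx
    exact ⟨by linarith [hx.2], by linarith [hx.1]⟩
  have hfcomp : ContinuousOn (fun x => f (a + b - x)) (Icc a b) := by
    apply hf.comp (by continuity : Continuous fun x : ℝ => a + b - x).continuousOn
    intro x hx; exact mapsto x hx
  have hInt1 : IntervalIntegrable
      (fun x => (x - a) ^ p * (b - x) ^ q * (f x * f (a + b - x))) volume a b := by
    apply ContinuousOn.intervalIntegrable
    rw [uIcc_of_le hab.le]
    exact ((cmon p q hp hq).continuousOn).mul (hf.mul hfcomp)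
  have hInt2 : IntervalIntegrable G volume a b := by
    apply ContinuousOn.intervalIntegrable
    rw [uIcc_of_le hab.le]
    apply (continuous_const.mul (((continuous_const.mul
      (((cmon p (q+2) hp (by linarith)).add (cmon (p+2) q (by linarith) hq)))).add
      (continuous_const.mul (cmon (p+1) (q+1) (by linarith) (by linarith)))))).continuousOn
  -- pointwise inequality
  have hpt : ∀ x ∈ Icc a b,
      (x - a) ^ p * (b - x) ^ q * (f x * f (a + b - x)) ≤ G x := by
    intro x hx
    set u := x - a with hu
    set v := b - x with hv
    have hu0 : 0 ≤ u := by simp [hu]; linarith [hx.1]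
    have hv0 : 0 ≤ v := by simp [hv]; linarith [hx.2]
    have huv : u + v = L := by rw [hu, hv, hLdef]; ring
    -- convexity bounds
    have hx1 : f x ≤ (v * A + u * B) / L := by
      have hmem := hconv.2 (⟨le_refl a, hab.le⟩ : a ∈ Icc a b) (⟨hab.le, le_refl b⟩ : b ∈ Icc a b)
        (by positivity : (0:ℝ) ≤ v / L) (by positivity : (0:ℝ) ≤ u / L)
        (by field_simp; linarith [huv])
      simp only [smul_eq_mul] at hmem
      have harg : (v / L) * a + (u / L) * b = x := by
        rw [div_mul_eq_mul_div, div_mul_eq_mul_div, ← add_div,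
          show v * a + u * b = x * L from by rw [hv, hu, hLdef]; ring]
        field_simp
      rw [harg] at hmem
      calc f x ≤ (v / L) * A + (u / L) * B := hmem
        _ = (v * A + u * B) / L := by ring
    have hx2 : f (a + b - x) ≤ (u * A + v * B) / L := by
      have hmem := hconv.2 (⟨le_refl a, hab.le⟩ : a ∈ Icc a b) (⟨hab.le, le_refl b⟩ : b ∈ Icc a b)
        (by positivity : (0:ℝ) ≤ u / L) (by positivity : (0:ℝ) ≤ v / L)
        (by field_simp; linarith [huv])
      simp only [smul_eq_mul] at hmem
      have harg : (u / L) * a + (v / L) * b = a + b - x := by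
        rw [div_mul_eq_mul_div, div_mul_eq_mul_div, ← add_div,
          show u * a + v * b = (a + b - x) * L from by rw [hv, hu, hLdef]; ring]
        field_simp
      rw [harg] at hmem
      calc f (a + b - x) ≤ (u / L) * A + (v / L) * B := hmem
        _ = (u * A + v * B) / L := by ring
    have hfx0 : 0 ≤ f x := hnn x hx
    have hfy0 : 0 ≤ f (a + b - x) := hnn _ (mapsto x hx)
    have hbd1 : 0 ≤ (v * A + u * B) / L := by positivity
    have hprod : f x * f (a + b - x) ≤ ((v * A + u * B) * (u * A + v * B)) / L ^ 2 := by
      calc f x * f (a + b - x) ≤ ((v * A + u * B) / L) * ((u * A + v * B) / L) :=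
            mul_le_mul hx1 hx2 hfy0 hbd1
        _ = ((v * A + u * B) * (u * A + v * B)) / L ^ 2 := by rw [div_mul_div_comm, sq]
    have hkey : ((v * A + u * B) * (u * A + v * B)) / L ^ 2 ≤
        ((A ^ 2 + B ^ 2) * (v ^ 2 + u ^ 2) + 4 * A * B * (u * v)) / (2 * L ^ 2) := by
      rw [div_le_div_iff₀ (by positivity) (by positivity)]
      nlinarith [sq_nonneg ((u - v) * (A - B)), sq_nonneg L, hL]
    have hw : (0:ℝ) ≤ u ^ p * v ^ q := by positivity
    have step : u ^ p * v ^ q * (f x * f (a + b - x)) ≤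
        u ^ p * v ^ q * (((A ^ 2 + B ^ 2) * (v ^ 2 + u ^ 2) + 4 * A * B * (u * v)) / (2 * L ^ 2)) :=
      mul_le_mul_of_nonneg_left (hprod.trans hkey) hw
    refine step.trans (le_of_eq ?_)
    -- now show equality with G x
    rw [hG]
    simp only
    have e1 : v ^ (q + 2) = v ^ q * v ^ 2 := by
      rw [Real.rpow_add' hv0 (by positivity), Real.rpow_two]
    have e2 : u ^ (p + 2) = u ^ p * u ^ 2 := by
      rw [Real.rpow_add' hu0 (by positivity), Real.rpow_two]
    have e3 : u ^ (p + 1) = u ^ p * u := by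
      rw [Real.rpow_add' hu0 (by positivity), Real.rpow_one]
    have e4 : v ^ (q + 1) = v ^ q * v := by
      rw [Real.rpow_add' hv0 (by positivity), Real.rpow_one]
    rw [e1, e2, e3, e4]
    ring
  -- first inequality
  have hstep1 : (∫ x in a..b, (x - a) ^ p * (b - x) ^ q * (f x * f (a + b - x)))
      ≤ ∫ x in a..b, G x :=
    intervalIntegral.integral_mono_on hab.le hInt1 hInt2 hpt
  refine hstep1.trans (le_of_eq ?_)
  -- compute ∫ G
  have i1 : (∫ x in a..b, (x - a) ^ p * (b - x) ^ (q + 2))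
      = L ^ (p + q + 3) * eulerBeta (p + 1) (q + 3) := by
    have := key_int a b hab p (q + 2) hp (by linarith)
    rw [this, hLdef, show p + (q + 2) + 1 = p + q + 3 by ring,
      show q + 2 + 1 = q + 3 by ring]
  have i2 : (∫ x in a..b, (x - a) ^ (p + 2) * (b - x) ^ q)
      = L ^ (p + q + 3) * eulerBeta (q + 1) (p + 3) := by
    have := key_int a b hab (p + 2) q (by linarith) hq
    rw [this, hLdef, show p + 2 + q + 1 = p + q + 3 by ring, show p + 2 + 1 = p + 3 by ring,
      eulerBeta_symm (p + 3) (q + 1)]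
  have i3 : (∫ x in a..b, (x - a) ^ (p + 1) * (b - x) ^ (q + 1))
      = L ^ (p + q + 3) * eulerBeta (p + 2) (q + 2) := by
    have := key_int a b hab (p + 1) (q + 1) (by linarith) (by linarith)
    rw [this, hLdef, show p + 1 + (q + 1) + 1 = p + q + 3 by ring, show p + 1 + 1 = p + 2 by ring,
      show q + 1 + 1 = q + 2 by ring]
  have hIG : (∫ x in a..b, G x) = (1 / (2 * L ^ 2)) *
      ((A ^ 2 + B ^ 2) * (L ^ (p + q + 3) * eulerBeta (p + 1) (q + 3)
          + L ^ (p + q + 3) * eulerBeta (q + 1) (p + 3))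
        + 4 * A * B * (L ^ (p + q + 3) * eulerBeta (p + 2) (q + 2))) := by
    rw [hG]
    rw [intervalIntegral.integral_const_mul]
    congr 1
    rw [intervalIntegral.integral_add, intervalIntegral.integral_const_mul,
      intervalIntegral.integral_const_mul, intervalIntegral.integral_add, i1, i2, i3]
    · exact ((cmon p (q+2) hp (by linarith)).intervalIntegrable a b)
    · exact ((cmon (p+2) q (by linarith) hq).intervalIntegrable a b)
    · exact ((continuous_const.mul ((cmon p (q+2) hp (by linarith)).add
        (cmon (p+2) q (by linarith) hq))).intervalIntegrable a b)
    · exact ((continuous_const.mul (cmon (p+1) (q+1) (by linarith) (by linarith))).intervalIntegrable a b)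
  rw [hIG]
  have hLpow : L ^ (p + q + 3) = L ^ (p + q + 1) * L ^ 2 := by
    rw [show p + q + 3 = (p + q + 1) + 2 by ring, Real.rpow_add hL, Real.rpow_two]
  rw [hLpow]
  have hL2 : (0:ℝ) < L ^ 2 := by positivity
  field_simp
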